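/- Let ξ ∈ ℝ⁵ be a nonzero vector with ξ·a(v) ≤ 0 for almost every v ∈ ℝ³, and let g : ℝ³ → ℝ be nonnegative, not almost-everywhere zero, with ν(1+|v|²)g integrable. Then ξ·μ(g) = ∫ ν(v) (ξ·a(v)) g(v) dv < 0, and consequently for any λ ∈ Λ the function s ↦ z(λ + sξ; μ(g)) = ∫ ν exp((λ+sξ)·a) dv − (λ+sξ)·μ(g) tends to +∞ as s → +∞ (provided λ + sξ ∈ Λ for all s > 0). -/

import Mathlib

open MeasureTheory Real Filter
open scoped Topology

noncomputable section

abbrev V3 : Type := Fin 3 → ℝ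

def dot3 (a b : V3) : ℝ := ∑ i, a i * b i

def nsq (v : V3) : ℝ := ∑ i, (v i) ^ 2

abbrev L5 : Type := ℝ × V3 × ℝ

def dot5 (a b : L5) : ℝ := a.1 * b.1 + dot3 a.2.1 b.2.1 + a.2.2 * b.2.2

def aVec (m : ℝ) (v : V3) : L5 := (m, m • v, m * nsq v)

def expA (m : ℝ) (l : L5) (v : V3) : ℝ := Real.exp (dot5 l (aVec m v))

def momVec (m : ℝ) (ν g : V3 → ℝ) : L5 :=
  (∫ v, ν v * (m * g v), fun i => ∫ v, ν v * (m * v i) * g v,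
    ∫ v, ν v * (m * nsq v) * g v)

def zdual (m : ℝ) (ν : V3 → ℝ) (l ρ : L5) : ℝ :=
  (∫ v, ν v * expA m l v) - dot5 l ρ

def entH (z : ℝ) : ℝ := z * Real.log z - z

def dualCLM (ρ : L5) : L5 →L[ℝ] ℝ :=
  LinearMap.toContinuousLinearMap
    { toFun := fun δ => dot5 δ ρ
      map_add' := by
        intro a b
        simp [dot5, dot3, Prod.fst_add, Prod.snd_add, Pi.add_apply, add_mul,
          Finset.sum_add_distrib]
        ring
      map_smul' := by
        intro c a
        simp only [dot5, dot3, Prod.smul_fst, Prod.smul_snd, Pi.smul_apply,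
          smul_eq_mul, Finset.mul_sum, RingHom.id_apply]
        ring_nf
        rw [Finset.mul_sum]
        ring_nf }


lemma nsq_nonneg' (v : V3) : 0 ≤ nsq v := Finset.sum_nonneg fun i _ => sq_nonneg _

lemma sq_le_nsq' (v : V3) (i : Fin 3) : (v i)^2 ≤ nsq v :=
  Finset.single_le_sum (fun j _ => sq_nonneg (v j)) (Finset.mem_univ i)

lemma abs_le_one_add_nsq' (v : V3) (i : Fin 3) : |v i| ≤ 1 + nsq v := by
  have h1 : |v i| ≤ 1 + (v i)^2 := by nlinarith [sq_nonneg (|v i| - 1), sq_abs (v i)]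
  have := sq_le_nsq' v i; linarith

lemma quad_finite' (a b c : ℝ) (h : a ≠ 0 ∨ b ≠ 0) :
    {t : ℝ | a * t^2 + b * t + c = 0}.Finite := by
  have hP : (Polynomial.C a * Polynomial.X^2 + Polynomial.C b * Polynomial.X
      + Polynomial.C c : Polynomial ℝ) ≠ 0 := by
    intro h0
    rcases h with ha | hb
    · have := congrArg (fun p => Polynomial.coeff p 2) h0
      simp [Polynomial.coeff_C] at this
      exact ha this
    · have := congrArg (fun p => Polynomial.coeff p 1) h0
      simp [Polynomial.coeff_C] at this
      exact hb this
  have hfin := Polynomial.finite_setOf_isRoot hP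
  convert hfin using 1
  ext t
  simp [Polynomial.IsRoot]

lemma dot5_measurable (m : ℝ) (ξ : L5) :
    Measurable (fun v : V3 => dot5 ξ (aVec m v)) := by
  unfold dot5 dot3 aVec nsq
  simp only [Pi.smul_apply, smul_eq_mul]
  fun_prop

lemma aux_null (m : ℝ) (hm : m ≠ 0) (ξ : L5) (hξ : ξ ≠ 0) :
    volume {v : V3 | dot5 ξ (aVec m v) = 0} = 0 := by
  obtain ⟨c, b, a⟩ := ξ
  by_cases hba : a = 0 ∧ b = 0
  · obtain ⟨ha, hb⟩ := hba
    have hc : c ≠ 0 := by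
      rintro rfl; exact hξ (by simp [ha, hb, Prod.ext_iff])
    have hempty : {v : V3 | dot5 (c, b, a) (aVec m v) = 0} = ∅ := by
      ext v
      simp [dot5, dot3, aVec, ha, hb, hc, hm]
    simp [hempty]
  · -- choose a coordinate i with m*a ≠ 0 ∨ m*(b i) ≠ 0
    obtain ⟨i, hi⟩ : ∃ i : Fin 3, m * a ≠ 0 ∨ m * b i ≠ 0 := by
      by_cases ha : a = 0
      · have hb : b ≠ 0 := fun h => hba ⟨ha, h⟩
        obtain ⟨i, hbi⟩ := Function.ne_iff.mp hb
        exact ⟨i, Or.inr (mul_ne_zero hm hbi)⟩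
      · exact ⟨0, Or.inl (mul_ne_zero hm ha)⟩
    set f : V3 → ℝ := fun v => dot5 (c, b, a) (aVec m v) with hf
    have hfm : Measurable f := dot5_measurable m (c, b, a)
    have hSm : MeasurableSet {v : V3 | f v = 0} := hfm (measurableSet_singleton 0)
    set e := MeasurableEquiv.piFinSuccAbove (fun _ : Fin 3 => ℝ) i with he
    have mp := (volume_preserving_piFinSuccAbove (fun _ : Fin 3 => ℝ) i).symm
    have key : volume (e.symm ⁻¹' {v : V3 | f v = 0}) = volume {v : V3 | f v = 0} :=
      mp.measure_preimage hSm.nullMeasurableSet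
    rw [← key]
    have hslice : ∀ (t : ℝ) (w : Fin 2 → ℝ), f (i.insertNth t w) =
        (m*a) * t^2 + (m * b i) * t +
          (c * m + (∑ j, b (i.succAbove j) * (m * w j)) + a * m * (∑ j, (w j)^2)) := by
      intro t w
      simp only [hf, dot5, dot3, aVec, nsq, Pi.smul_apply, smul_eq_mul]
      have h1 := Fin.sum_univ_succAbove (fun j : Fin 3 => b j * (m * (i.insertNth t w : V3) j)) i
      have h2 := Fin.sum_univ_succAbove (fun j : Fin 3 => ((i.insertNth t w : V3) j)^2) i
      simp only [Fin.insertNth_apply_same, Fin.insertNth_apply_succAbove] at h1 h2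
      rw [h1, h2]
      ring
    set T' : Set ((Fin 2 → ℝ) × ℝ) := {p | f (i.insertNth p.2 p.1) = 0} with hT'
    have hT'm : MeasurableSet T' := by
      have hmeas : Measurable (fun p : (Fin 2 → ℝ) × ℝ => (i.insertNth p.2 p.1 : V3)) := by
        refine measurable_pi_iff.mpr fun j => ?_
        refine i.succAboveCases ?_ ?_ j
        · simpa using measurable_snd
        · intro k; simpa [Function.comp_def] using (measurable_pi_apply k).comp measurable_fst
      exact (hfm.comp hmeas) (measurableSet_singleton 0)
    have hTeq : e.symm ⁻¹' {v : V3 | f v = 0} = Prod.swap ⁻¹' T' := by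
      ext p
      simp [he, T', MeasurableEquiv.piFinSuccAbove_symm_apply, Prod.swap, Fin.insertNthEquiv]
    rw [hTeq, show (volume : Measure (ℝ × (Fin 2 → ℝ))) = (volume : Measure ℝ).prod volume from
      Measure.volume_eq_prod _ _, ← Measure.map_apply measurable_swap hT'm, Measure.prod_swap]
    rw [Measure.measure_prod_null hT'm]
    refine ae_of_all _ fun w => ?_
    show volume (Prod.mk w ⁻¹' T') = 0
    have hset : (Prod.mk w ⁻¹' T') = {t : ℝ | (m*a) * t^2 + (m * b i) * t +
        (c * m + (∑ j, b (i.succAbove j) * (m * w j)) + a * m * (∑ j, (w j)^2)) = 0} := by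
      ext t; simp [T', hslice]
    rw [hset]
    exact Set.Finite.measure_zero (quad_finite' _ _ _ hi) _

lemma dot5_add_smul' (l ξ ρ : L5) (s : ℝ) :
    dot5 (l + s • ξ) ρ = dot5 l ρ + s * dot5 ξ ρ := by
  simp only [dot5, dot3, Prod.fst_add, Prod.snd_add, Prod.smul_fst, Prod.smul_snd,
    Pi.add_apply, Pi.smul_apply, smul_eq_mul, add_mul, Finset.sum_add_distrib,
    Finset.mul_sum, mul_add]
  ring_nf



lemma main_bound (m : ℝ) (hm : 0 < m) (ξ : L5) (v : V3) :
    |dot5 ξ (aVec m v)| ≤ m * (|ξ.1| + (∑ j, |ξ.2.1 j|) + |ξ.2.2|) * (1 + nsq v) := by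
  have h1 : 0 ≤ nsq v := nsq_nonneg' v
  have h2 : ∀ j, |v j| ≤ 1 + nsq v := abs_le_one_add_nsq' v
  have t1 : |ξ.1 * m| ≤ |ξ.1| * m * (1 + nsq v) := by
    rw [abs_mul, abs_of_pos hm]
    nlinarith [abs_nonneg ξ.1, mul_nonneg (abs_nonneg ξ.1) hm.le]
  have t2 : |dot3 ξ.2.1 (m • v)| ≤ (∑ j, |ξ.2.1 j|) * m * (1 + nsq v) := by
    refine (Finset.abs_sum_le_sum_abs _ _).trans ?_
    rw [Finset.sum_mul, Finset.sum_mul]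
    refine Finset.sum_le_sum fun j _ => ?_
    simp only [Pi.smul_apply, smul_eq_mul, abs_mul, abs_of_pos hm]
    rw [← mul_assoc]
    exact mul_le_mul_of_nonneg_left (h2 j) (by positivity)
  have t3 : |ξ.2.2 * (m * nsq v)| ≤ |ξ.2.2| * m * (1 + nsq v) := by
    rw [abs_mul, abs_mul, abs_of_pos hm, abs_of_nonneg h1]
    nlinarith [abs_nonneg ξ.2.2, mul_nonneg (abs_nonneg ξ.2.2) hm.le]
  have hAv : dot5 ξ (aVec m v) = ξ.1 * m + dot3 ξ.2.1 (m • v) + ξ.2.2 * (m * nsq v) := rfl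
  calc |dot5 ξ (aVec m v)| ≤ |ξ.1 * m| + |dot3 ξ.2.1 (m • v)| + |ξ.2.2 * (m * nsq v)| := by
        rw [hAv]; exact abs_add_three _ _ _
    _ ≤ |ξ.1| * m * (1 + nsq v) + (∑ j, |ξ.2.1 j|) * m * (1 + nsq v)
          + |ξ.2.2| * m * (1 + nsq v) := add_le_add (add_le_add t1 t2) t3
    _ = m * (|ξ.1| + (∑ j, |ξ.2.1 j|) + |ξ.2.2|) * (1 + nsq v) := by ring

/-- if `ξ ≠ 0` satisfies `ξ·a(v) ≤ 0` a.e. and `g ≥ 0` is not a.e.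
zero with `ν(1+|v|²)g` integrable, then `ξ·μ(g) = ∫ ν (ξ·a) g dv < 0`, and thus
`z(λ+sξ; μ(g)) → +∞` as `s → +∞` whenever the ray `λ + sξ` stays in `Λ`. -/
theorem direction_nonpositive_unbounded
    (m : ℝ) (hm : 0 < m)
    (ν : V3 → ℝ) (hνmeas : Measurable ν) (hνpos : ∀ v, 0 < ν v)
    (hass : ∀ l : L5, Integrable (fun v => ν v * expA m l v) ↔ l.2.2 < 0)
    (ξ : L5) (hξ : ξ ≠ 0)
    (hξa : ∀ᵐ v, dot5 ξ (aVec m v) ≤ 0)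
    (g : V3 → ℝ) (hgmeas : Measurable g) (hg0 : ∀ v, 0 ≤ g v)
    (hgne : ¬ g =ᵐ[volume] (fun _ => (0 : ℝ)))
    (hgint : Integrable (fun v => ν v * (1 + nsq v) * g v)) :
    dot5 ξ (momVec m ν g) = (∫ v, ν v * dot5 ξ (aVec m v) * g v) ∧
    (∫ v, ν v * dot5 ξ (aVec m v) * g v) < 0 ∧
    (∀ l : L5, l.2.2 < 0 → (∀ s : ℝ, 0 < s → (l + s • ξ).2.2 < 0) →
      Tendsto (fun s : ℝ => zdual m ν (l + s • ξ) (momVec m ν g)) atTop atTop) := by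
  
  have hνnn : ∀ v, (0:ℝ) ≤ ν v := fun v => (hνpos v).le
  have hAmeas : Measurable (fun v : V3 => dot5 ξ (aVec m v)) := dot5_measurable m ξ
  have hnsqmeas : Measurable nsq := by unfold nsq; fun_prop
  set K : ℝ := |ξ.1| + (∑ j, |ξ.2.1 j|) + |ξ.2.2| with hK
  -- integrability of the component moments
  have hbound : ∀ (φ : V3 → ℝ), Measurable φ → (∀ v, |φ v| ≤ 1 + nsq v) →
      Integrable (fun v => ν v * (m * φ v) * g v) := by
    intro φ hφm hφb
    refine Integrable.mono' (hgint.const_mul m)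
      ((hνmeas.mul (hφm.const_mul m)).mul hgmeas).aestronglyMeasurable
      (ae_of_all _ fun v => ?_)
    have habs : |ν v * (m * φ v) * g v| = ν v * (m * |φ v|) * g v := by
      rw [abs_mul, abs_mul, abs_of_nonneg (hνnn v), abs_mul, abs_of_pos hm,
        abs_of_nonneg (hg0 v)]
    rw [Real.norm_eq_abs, habs]
    calc ν v * (m * |φ v|) * g v ≤ ν v * (m * (1 + nsq v)) * g v :=
          mul_le_mul_of_nonneg_right (mul_le_mul_of_nonneg_left
            (mul_le_mul_of_nonneg_left (hφb v) hm.le) (hνnn v)) (hg0 v)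
      _ = m * (ν v * (1 + nsq v) * g v) := by ring
  have I0 : Integrable (fun v => ν v * (m * g v)) := by
    refine Integrable.mono' (hgint.const_mul m)
      ((hνmeas.mul (hgmeas.const_mul m)).aestronglyMeasurable)
      (ae_of_all _ fun v => ?_)
    have h1 : 0 ≤ nsq v := nsq_nonneg' v
    rw [Real.norm_eq_abs, abs_mul, abs_mul, abs_of_nonneg (hνnn v), abs_of_pos hm, abs_of_nonneg (hg0 v)]
    nlinarith [mul_nonneg (mul_nonneg (mul_nonneg hm.le (hνnn v)) h1) (hg0 v)]
  have Ii : ∀ i : Fin 3, Integrable (fun v => ν v * (m * v i) * g v) := fun i =>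
    hbound (fun v => v i) (measurable_pi_apply i) (fun v => abs_le_one_add_nsq' v i)
  have I4 : Integrable (fun v => ν v * (m * nsq v) * g v) :=
    hbound nsq hnsqmeas (fun v => by
      rw [abs_of_nonneg (nsq_nonneg' v)]; linarith [nsq_nonneg' v])
  have hIh : Integrable (fun v => ν v * dot5 ξ (aVec m v) * g v) := by
    refine Integrable.mono' (hgint.const_mul (m * K))
      (((hνmeas.mul hAmeas).mul hgmeas).aestronglyMeasurable)
      (ae_of_all _ fun v => ?_)
    have habs : |ν v * dot5 ξ (aVec m v) * g v| = ν v * |dot5 ξ (aVec m v)| * g v := by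
      rw [abs_mul, abs_mul, abs_of_nonneg (hνnn v), abs_of_nonneg (hg0 v)]
    rw [Real.norm_eq_abs, habs]
    calc ν v * |dot5 ξ (aVec m v)| * g v ≤ ν v * (m * K * (1 + nsq v)) * g v :=
          mul_le_mul_of_nonneg_right (mul_le_mul_of_nonneg_left
            (main_bound m hm ξ v) (hνnn v)) (hg0 v)
      _ = m * K * (ν v * (1 + nsq v) * g v) := by ring
  -- pointwise decomposition
  have hpt : ∀ v, ν v * dot5 ξ (aVec m v) * g v =
      ξ.1 * (ν v * (m * g v)) + (∑ i, ξ.2.1 i * (ν v * (m * v i) * g v))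
        + ξ.2.2 * (ν v * (m * nsq v) * g v) := by
    intro v
    have hAv : dot5 ξ (aVec m v)
        = ξ.1 * m + (∑ i, ξ.2.1 i * (m * v i)) + ξ.2.2 * (m * nsq v) := by
      simp [dot5, dot3, aVec]
    have hsum : (∑ i, ξ.2.1 i * (ν v * (m * v i) * g v))
        = ν v * (∑ i, ξ.2.1 i * (m * v i)) * g v := by
      rw [Finset.mul_sum, Finset.sum_mul]
      exact Finset.sum_congr rfl fun i _ => by ring
    rw [hAv, hsum]; ring
  have hRHS : (∫ v, ν v * dot5 ξ (aVec m v) * g v)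
      = ξ.1 * (∫ v, ν v * (m * g v)) + (∑ i, ξ.2.1 i * ∫ v, ν v * (m * v i) * g v)
        + ξ.2.2 * ∫ v, ν v * (m * nsq v) * g v := by
    simp_rw [hpt]
    have hI1 : Integrable (fun v => ξ.1 * (ν v * (m * g v))
        + ∑ i, ξ.2.1 i * (ν v * (m * v i) * g v)) := by
      exact (I0.const_mul ξ.1).add
        (integrable_finset_sum _ fun i _ => (Ii i).const_mul (ξ.2.1 i))
    have hI2 : Integrable (fun v => ξ.2.2 * (ν v * (m * nsq v) * g v)) :=
      I4.const_mul ξ.2.2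
    rw [integral_add hI1 hI2,
      integral_add (I0.const_mul ξ.1)
        (integrable_finset_sum _ fun i _ => (Ii i).const_mul (ξ.2.1 i)),
      integral_finset_sum _ (fun i _ => (Ii i).const_mul (ξ.2.1 i))]
    simp_rw [integral_const_mul]
  have part1 : dot5 ξ (momVec m ν g) = ∫ v, ν v * dot5 ξ (aVec m v) * g v := by
    rw [hRHS]; simp [dot5, dot3, momVec]
  -- strict negativity
  have hle : ∀ᵐ v, ν v * dot5 ξ (aVec m v) * g v ≤ 0 := by
    filter_upwards [hξa] with v hv
    have h1 : ν v * dot5 ξ (aVec m v) ≤ 0 :=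
      mul_nonpos_iff.mpr (Or.inl ⟨hνnn v, hv⟩)
    exact mul_nonpos_iff.mpr (Or.inr ⟨h1, hg0 v⟩)
  have hintle : (∫ v, ν v * dot5 ξ (aVec m v) * g v) ≤ 0 := integral_nonpos_of_ae hle
  have hne0 : (∫ v, ν v * dot5 ξ (aVec m v) * g v) ≠ 0 := by
    intro h0
    have hnn : 0 ≤ᵐ[volume] fun v => -(ν v * dot5 ξ (aVec m v) * g v) :=
      hle.mono fun v hv => by simpa using hv
    have hzero := (integral_eq_zero_iff_of_nonneg_ae hnn hIh.neg).mp
      (by rw [integral_neg, h0, neg_zero])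
    have hAne : ∀ᵐ v, dot5 ξ (aVec m v) ≠ 0 := by
      have hnull := aux_null m hm.ne' ξ hξ
      rw [ae_iff]
      convert hnull using 2
      ext v; simp
    have hg_zero : g =ᵐ[volume] fun _ => (0:ℝ) := by
      filter_upwards [hzero, hAne] with v hv1 hv2
      have hv1' : ν v * dot5 ξ (aVec m v) * g v = 0 := by
        have := hv1; simp only [Pi.zero_apply, neg_eq_zero] at this; exact this
      rcases mul_eq_zero.mp hv1' with h | h
      · rcases mul_eq_zero.mp h with h' | h'
        · exact absurd h' (hνpos v).ne'
        · exact absurd h' hv2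
      · exact h
    exact hgne hg_zero
  have part2 : (∫ v, ν v * dot5 ξ (aVec m v) * g v) < 0 := lt_of_le_of_ne hintle hne0
  refine ⟨part1, part2, ?_⟩
  intro l hl hray
  have hneg : dot5 ξ (momVec m ν g) < 0 := by rw [part1]; exact part2
  refine tendsto_atTop_mono (fun s => ?_)
    (tendsto_atTop_add_const_left _ (-(dot5 l (momVec m ν g)))
      (Tendsto.atTop_mul_const (neg_pos.mpr hneg) tendsto_id))
  unfold zdual
  rw [dot5_add_smul']
  have h0 : 0 ≤ ∫ v, ν v * expA m (l + s • ξ) v :=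
    integral_nonneg fun v => mul_nonneg (hνnn v)
      (le_of_lt (by unfold expA; exact Real.exp_pos _))
  simp only [id_eq]
  linarith
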